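/- Brezzi saddle-point well-posedness applied to the abstract KKT operator: let W, U, O be Hilbert spaces, A : U → W' bounded with closed range and ‖u‖_{U/ker A} ≤ c₁‖Au‖_{W'}, and T : U → O bounded with ‖u‖_U ≤ c₂‖Tu‖_O on ker A. Then for every α > 0 the block operator A_α = [[αM, 0, M'], [0, K, A'], [M, A, 0]] : V → V', where V = W_α × U_α × W_{α⁻¹}, satisfies c ≤ sup_{y≠0} ⟨A_α x, y⟩/(‖x‖_V‖y‖_V) ≤ C for all nonzero x, with constants c, C > 0 independent of α. -/

import Mathlib

/-!
STATEMENT 11: Brezzi well-posedness of the abstract KKT operator with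
α-independent constants.  The dual spaces W' and U' are identified with W and
U via the Riesz maps, so M = id, K is represented by its bilinear form
(Tu,Tv)_O, and A : U →L W.  The operator A_α = [[αM,0,M'],[0,K,A'],[M,A,0]]
is represented by its bilinear form `kktForm`, and V = W_α × U_α × W_{α⁻¹}
carries the weighted norm `kktVnorm` with
‖f‖²_{W_α} = α‖f‖², ‖u‖²_{U_α} = α‖Au‖² + ‖Tu‖², ‖w‖²_{W_{α⁻¹}} = α⁻¹‖w‖².
Assumptions: closed range estimate ‖u‖_{U/ker A} ≤ c₁‖Au‖ and invertibility
of T on ker A, i.e. ‖u‖ ≤ c₂‖Tu‖ on ker A.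
-/

open scoped RealInnerProductSpace

section

variable {W U O : Type*}
  [NormedAddCommGroup W] [InnerProductSpace ℝ W]
  [NormedAddCommGroup U] [InnerProductSpace ℝ U]
  [NormedAddCommGroup O] [InnerProductSpace ℝ O]

/-- The weighted norm on V = W_α × U_α × W_{α⁻¹}. -/
noncomputable def kktVnorm (α : ℝ) (A : U →L[ℝ] W) (T : U →L[ℝ] O)
    (x : W × U × W) : ℝ :=
  Real.sqrt (α * ‖x.1‖ ^ 2 + (α * ‖A x.2.1‖ ^ 2 + ‖T x.2.1‖ ^ 2) +
    α⁻¹ * ‖x.2.2‖ ^ 2)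

/-- The bilinear form ⟨A_α x, y⟩ of the KKT block operator
[[αM,0,M'],[0,K,A'],[M,A,0]]. -/
noncomputable def kktForm (α : ℝ) (A : U →L[ℝ] W) (T : U →L[ℝ] O)
    (x y : W × U × W) : ℝ :=
  α * ⟪x.1, y.1⟫ + ⟪T x.2.1, T y.2.1⟫ + ⟪x.1, y.2.2⟫ + ⟪A x.2.1, y.2.2⟫ +
    ⟪y.1, x.2.2⟫ + ⟪A y.2.1, x.2.2⟫

lemma kktVnorm_nonneg (α : ℝ) (A : U →L[ℝ] W) (T : U →L[ℝ] O) (x : W × U × W) :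
    0 ≤ kktVnorm α A T x := Real.sqrt_nonneg _

private lemma sqrt_prod_le' {t p q Sx Sy : ℝ} (hpS : p ≤ Sx) (hqS : q ≤ Sy)
    (ht : t ≤ Real.sqrt p * Real.sqrt q) : t ≤ Real.sqrt Sx * Real.sqrt Sy :=
  ht.trans (mul_le_mul (Real.sqrt_le_sqrt hpS) (Real.sqrt_le_sqrt hqS)
    (Real.sqrt_nonneg _) (Real.sqrt_nonneg _))

private lemma inner_sqrt_bound' {E : Type*} [NormedAddCommGroup E] [InnerProductSpace ℝ E]
    (a b : E) (c1 c2 : ℝ) (h1 : 0 ≤ c1) (h2 : 0 ≤ c2) :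
    Real.sqrt (c1 * c2) * ⟪a, b⟫ ≤ Real.sqrt (c1 * ‖a‖ ^ 2) * Real.sqrt (c2 * ‖b‖ ^ 2) := by
  have e1 : Real.sqrt (c1 * ‖a‖ ^ 2) = Real.sqrt c1 * ‖a‖ := by
    rw [Real.sqrt_mul h1, Real.sqrt_sq (norm_nonneg _)]
  have e2 : Real.sqrt (c2 * ‖b‖ ^ 2) = Real.sqrt c2 * ‖b‖ := by
    rw [Real.sqrt_mul h2, Real.sqrt_sq (norm_nonneg _)]
  have e3 : Real.sqrt (c1 * c2) = Real.sqrt c1 * Real.sqrt c2 := Real.sqrt_mul h1 _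
  have h := real_inner_le_norm a b
  rw [e1, e2, e3]
  have hnn : (0:ℝ) ≤ Real.sqrt c1 * Real.sqrt c2 := by positivity
  nlinarith [mul_le_mul_of_nonneg_left h hnn]

/-- Boundedness (continuity) of the KKT form with α-independent constant 6. -/
lemma kkt_bound (α : ℝ) (hα : 0 < α) (A : U →L[ℝ] W) (T : U →L[ℝ] O)
    (x y : W × U × W) :
    kktForm α A T x y ≤ 6 * (kktVnorm α A T x * kktVnorm α A T y) := by
  have hαi : (0:ℝ) ≤ α⁻¹ := by positivity
  have hαα : α * α⁻¹ = 1 := mul_inv_cancel₀ hα.ne'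
  obtain ⟨f, u, w⟩ := x
  obtain ⟨g, v, z⟩ := y
  simp only [kktForm, kktVnorm]
  have n1 : (0:ℝ) ≤ α * ‖f‖ ^ 2 := by positivity
  have n2 : (0:ℝ) ≤ α * ‖A u‖ ^ 2 := by positivity
  have n3 : (0:ℝ) ≤ ‖T u‖ ^ 2 := by positivity
  have n4 : (0:ℝ) ≤ α⁻¹ * ‖w‖ ^ 2 := by positivity
  have m1 : (0:ℝ) ≤ α * ‖g‖ ^ 2 := by positivity
  have m2 : (0:ℝ) ≤ α * ‖A v‖ ^ 2 := by positivity
  have m3 : (0:ℝ) ≤ ‖T v‖ ^ 2 := by positivity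
  have m4 : (0:ℝ) ≤ α⁻¹ * ‖z‖ ^ 2 := by positivity
  have hs1 : Real.sqrt (α * α) = α := Real.sqrt_mul_self hα.le
  have hs2 : Real.sqrt (α * α⁻¹) = 1 := by rw [hαα, Real.sqrt_one]
  have hs3 : Real.sqrt (α⁻¹ * α) = 1 := by rw [mul_comm, hαα, Real.sqrt_one]
  set Sx := α * ‖f‖ ^ 2 + (α * ‖A u‖ ^ 2 + ‖T u‖ ^ 2) + α⁻¹ * ‖w‖ ^ 2 with hSx
  set Sy := α * ‖g‖ ^ 2 + (α * ‖A v‖ ^ 2 + ‖T v‖ ^ 2) + α⁻¹ * ‖z‖ ^ 2 with hSy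
  have t1 : α * ⟪f, g⟫ ≤ Real.sqrt Sx * Real.sqrt Sy := by
    refine sqrt_prod_le' (p := α * ‖f‖ ^ 2) (q := α * ‖g‖ ^ 2)
      (by rw [hSx]; linarith) (by rw [hSy]; linarith) ?_
    have := inner_sqrt_bound' f g α α hα.le hα.le
    rwa [hs1] at this
  have t2 : ⟪T u, T v⟫ ≤ Real.sqrt Sx * Real.sqrt Sy := by
    refine sqrt_prod_le' (p := ‖T u‖ ^ 2) (q := ‖T v‖ ^ 2)
      (by rw [hSx]; linarith) (by rw [hSy]; linarith) ?_
    have := inner_sqrt_bound' (T u) (T v) 1 1 zero_le_one zero_le_one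
    simpa using this
  have t3 : ⟪f, z⟫ ≤ Real.sqrt Sx * Real.sqrt Sy := by
    refine sqrt_prod_le' (p := α * ‖f‖ ^ 2) (q := α⁻¹ * ‖z‖ ^ 2)
      (by rw [hSx]; linarith) (by rw [hSy]; linarith) ?_
    have := inner_sqrt_bound' f z α α⁻¹ hα.le hαi
    rwa [hs2, one_mul] at this
  have t4 : ⟪A u, z⟫ ≤ Real.sqrt Sx * Real.sqrt Sy := by
    refine sqrt_prod_le' (p := α * ‖A u‖ ^ 2) (q := α⁻¹ * ‖z‖ ^ 2)
      (by rw [hSx]; linarith) (by rw [hSy]; linarith) ?_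
    have := inner_sqrt_bound' (A u) z α α⁻¹ hα.le hαi
    rwa [hs2, one_mul] at this
  have t5 : ⟪g, w⟫ ≤ Real.sqrt Sx * Real.sqrt Sy := by
    rw [real_inner_comm]
    refine sqrt_prod_le' (p := α⁻¹ * ‖w‖ ^ 2) (q := α * ‖g‖ ^ 2)
      (by rw [hSx]; linarith) (by rw [hSy]; linarith) ?_
    have := inner_sqrt_bound' w g α⁻¹ α hαi hα.le
    rwa [hs3, one_mul] at this
  have t6 : ⟪A v, w⟫ ≤ Real.sqrt Sx * Real.sqrt Sy := by
    rw [real_inner_comm]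
    refine sqrt_prod_le' (p := α⁻¹ * ‖w‖ ^ 2) (q := α * ‖A v‖ ^ 2)
      (by rw [hSx]; linarith) (by rw [hSy]; linarith) ?_
    have := inner_sqrt_bound' w (A v) α⁻¹ α hαi hα.le
    rwa [hs3, one_mul] at this
  linarith

/-- Value of the KKT form at the Fortin-type test function. -/
private lemma kkt_test_form (α : ℝ) (hα : 0 < α) (A : U →L[ℝ] W) (T : U →L[ℝ] O)
    (f w : W) (u : U) :
    kktForm α A T (f, u, w)
      (f + (2⁻¹ * α⁻¹) • w, u, (2⁻¹ * α) • (f + A u) - w)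
    = (3/2) * α * ‖f‖^2 + (α/2) * ‖A u‖^2 + ‖T u‖^2 + (α⁻¹/2) * ‖w‖^2
      + (1/2) * ⟪f, w⟫ + α * ⟪f, A u⟫ := by
  have hαα : α * α⁻¹ = 1 := mul_inv_cancel₀ hα.ne'
  simp only [kktForm, inner_add_left, inner_add_right, inner_sub_left,
    inner_sub_right, real_inner_smul_left, real_inner_smul_right,
    real_inner_self_eq_norm_sq]
  rw [real_inner_comm w f, real_inner_comm (A u) f, real_inner_comm w (A u)]
  field_simp
  ring

private lemma kkt_test_lower (α : ℝ) (hα : 0 < α) (A : U →L[ℝ] W) (T : U →L[ℝ] O)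
    (f w : W) (u : U) :
    (1/4) * (α * ‖f‖^2 + (α * ‖A u‖^2 + ‖T u‖^2) + α⁻¹ * ‖w‖^2)
    ≤ kktForm α A T (f, u, w)
        (f + (2⁻¹ * α⁻¹) • w, u, (2⁻¹ * α) • (f + A u) - w) := by
  rw [kkt_test_form α hα A T f w u]
  have h1 : -(‖f‖ * ‖w‖) ≤ ⟪f, w⟫ := neg_le_of_abs_le (abs_real_inner_le_norm f w)
  have h3 : -(‖f‖ * ‖A u‖) ≤ ⟪f, A u⟫ := neg_le_of_abs_le (abs_real_inner_le_norm f (A u))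
  have key1 : 2 * (‖f‖ * ‖w‖) ≤ α * ‖f‖^2 + α⁻¹ * ‖w‖^2 := by
    have h := mul_nonneg (inv_nonneg.2 hα.le) (sq_nonneg (α * ‖f‖ - ‖w‖))
    have e : α⁻¹ * (α * ‖f‖ - ‖w‖)^2 = α * ‖f‖^2 - 2 * (‖f‖ * ‖w‖) + α⁻¹ * ‖w‖^2 := by
      field_simp; ring
    linarith [e ▸ h]
  nlinarith [key1, mul_nonneg hα.le (sq_nonneg (‖f‖ - ‖A u‖ / 2)),
    mul_le_mul_of_nonneg_left h3 hα.le, h1]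

private lemma kkt_test_norm (α : ℝ) (hα : 0 < α) (A : U →L[ℝ] W) (T : U →L[ℝ] O)
    (f w : W) (u : U) :
    α * ‖f + (2⁻¹ * α⁻¹) • w‖^2 + (α * ‖A u‖^2 + ‖T u‖^2)
      + α⁻¹ * ‖(2⁻¹ * α) • (f + A u) - w‖^2
    ≤ 3 * (α * ‖f‖^2 + (α * ‖A u‖^2 + ‖T u‖^2) + α⁻¹ * ‖w‖^2) := by
  have hαα : α * α⁻¹ = 1 := mul_inv_cancel₀ hα.ne'
  have eg : α * ‖f + (2⁻¹ * α⁻¹) • w‖^2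
      = α * ‖f‖^2 + ⟪f, w⟫ + (α⁻¹/4) * ‖w‖^2 := by
    rw [norm_add_sq_real, real_inner_smul_right, norm_smul,
      Real.norm_of_nonneg (by positivity : (0:ℝ) ≤ 2⁻¹ * α⁻¹)]
    field_simp [abs_of_pos hα]
    ring
  have ez : α⁻¹ * ‖(2⁻¹ * α) • (f + A u) - w‖^2
      = (α/4) * (‖f‖^2 + 2 * ⟪f, A u⟫ + ‖A u‖^2) - (⟪f, w⟫ + ⟪A u, w⟫)
        + α⁻¹ * ‖w‖^2 := by
    rw [norm_sub_sq_real, real_inner_smul_left, inner_add_left, norm_smul,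
      Real.norm_of_nonneg (by positivity : (0:ℝ) ≤ 2⁻¹ * α),
      mul_pow, norm_add_sq_real]
    field_simp [abs_of_pos hα]
    ring
  rw [eg, ez]
  have h1 : ⟪f, w⟫ ≤ ‖f‖ * ‖w‖ := real_inner_le_norm f w
  have h2 : -(‖A u‖ * ‖w‖) ≤ ⟪A u, w⟫ := neg_le_of_abs_le (abs_real_inner_le_norm _ w)
  have h3 : ⟪f, A u⟫ ≤ ‖f‖ * ‖A u‖ := real_inner_le_norm f (A u)
  have key1 : 2 * (‖f‖ * ‖w‖) ≤ α * ‖f‖^2 + α⁻¹ * ‖w‖^2 := by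
    have h := mul_nonneg (inv_nonneg.2 hα.le) (sq_nonneg (α * ‖f‖ - ‖w‖))
    have e : α⁻¹ * (α * ‖f‖ - ‖w‖)^2 = α * ‖f‖^2 - 2 * (‖f‖ * ‖w‖) + α⁻¹ * ‖w‖^2 := by
      field_simp; ring
    linarith [e ▸ h]
  have key2 : 2 * (‖A u‖ * ‖w‖) ≤ α * ‖A u‖^2 + α⁻¹ * ‖w‖^2 := by
    have h := mul_nonneg (inv_nonneg.2 hα.le) (sq_nonneg (α * ‖A u‖ - ‖w‖))
    have e : α⁻¹ * (α * ‖A u‖ - ‖w‖)^2 = α * ‖A u‖^2 - 2 * (‖A u‖ * ‖w‖) + α⁻¹ * ‖w‖^2 := by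
      field_simp; ring
    linarith [e ▸ h]
  nlinarith [key1, key2, h1, h2, mul_le_mul_of_nonneg_left h3 hα.le,
    mul_nonneg hα.le (sq_nonneg (‖f‖ - ‖A u‖)), sq_nonneg (‖T u‖),
    mul_nonneg hα.le (sq_nonneg ‖f‖), mul_nonneg hα.le (sq_nonneg ‖A u‖),
    mul_nonneg (inv_nonneg.2 hα.le) (sq_nonneg ‖w‖)]

theorem stmt11 (A : U →L[ℝ] W) (T : U →L[ℝ] O) (c₁ c₂ : ℝ)
    (hA : ∀ u : U, (⨅ v : LinearMap.ker (A : U →ₗ[ℝ] W), ‖u - (v : U)‖) ≤ c₁ * ‖A u‖)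
    (hT : ∀ u : U, A u = 0 → ‖u‖ ≤ c₂ * ‖T u‖) :
    ∃ c C : ℝ, 0 < c ∧ 0 < C ∧
      ∀ α : ℝ, 0 < α → ∀ x : W × U × W, x ≠ 0 →
        c ≤ (⨆ y : {y : W × U × W // y ≠ 0},
              kktForm α A T x (y : W × U × W) /
                (kktVnorm α A T x * kktVnorm α A T (y : W × U × W))) ∧
        (⨆ y : {y : W × U × W // y ≠ 0},
              kktForm α A T x (y : W × U × W) /
                (kktVnorm α A T x * kktVnorm α A T (y : W × U × W))) ≤ C := by
  refine ⟨1/7, 6, by norm_num, by norm_num, ?_⟩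
  intro α hα x hx
  obtain ⟨f, u, w⟩ := x
  have hαi : (0:ℝ) ≤ α⁻¹ := by positivity
  set Sx := α * ‖f‖ ^ 2 + (α * ‖A u‖ ^ 2 + ‖T u‖ ^ 2) + α⁻¹ * ‖w‖ ^ 2 with hSxdef
  -- positivity of Sx
  have n1 : (0:ℝ) ≤ α * ‖f‖ ^ 2 := by positivity
  have n2 : (0:ℝ) ≤ α * ‖A u‖ ^ 2 := by positivity
  have n3 : (0:ℝ) ≤ ‖T u‖ ^ 2 := by positivity
  have n4 : (0:ℝ) ≤ α⁻¹ * ‖w‖ ^ 2 := by positivity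
  have hSx_pos : 0 < Sx := by
    rcases (by rw [hSxdef]; linarith : (0:ℝ) ≤ Sx).lt_or_eq with h | h
    · exact h
    · exfalso
      have hf2 : α * ‖f‖ ^ 2 = 0 := by rw [hSxdef] at h; linarith
      have hw2 : α⁻¹ * ‖w‖ ^ 2 = 0 := by rw [hSxdef] at h; linarith
      have hAu2 : α * ‖A u‖ ^ 2 = 0 := by rw [hSxdef] at h; linarith
      have hTu2 : ‖T u‖ ^ 2 = 0 := by rw [hSxdef] at h; linarith
      have hf : f = 0 := by
        have := (mul_eq_zero.1 hf2).resolve_left hα.ne'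
        simpa [pow_eq_zero_iff] using this
      have hw : w = 0 := by
        have := (mul_eq_zero.1 hw2).resolve_left (by positivity : α⁻¹ ≠ 0)
        simpa [pow_eq_zero_iff] using this
      have hAu : A u = 0 := by
        have := (mul_eq_zero.1 hAu2).resolve_left hα.ne'
        simpa [pow_eq_zero_iff] using this
      have hTu : ‖T u‖ = 0 := by
        simpa [pow_eq_zero_iff] using hTu2
      have hu : u = 0 := by
        have := hT u hAu
        rw [hTu, mul_zero] at this
        exact norm_le_zero_iff.1 this
      exact hx (by simp [hf, hu, hw, Prod.ext_iff])
  have hVx_def : kktVnorm α A T (f, u, w) = Real.sqrt Sx := rfl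
  have hVx_pos : 0 < kktVnorm α A T (f, u, w) := by
    rw [hVx_def]; exact Real.sqrt_pos.2 hSx_pos
  have hVx_sq : kktVnorm α A T (f, u, w) ^ 2 = Sx := by
    rw [hVx_def]; exact Real.sq_sqrt hSx_pos.le
  -- the test function
  set y₀ : W × U × W := (f + (2⁻¹ * α⁻¹) • w, u, (2⁻¹ * α) • (f + A u) - w) with hy₀def
  have hlow : (1/4) * Sx ≤ kktForm α A T (f, u, w) y₀ :=
    kkt_test_lower α hα A T f w u
  have hVy3 : kktVnorm α A T y₀ ≤ Real.sqrt (3 * Sx) :=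
    Real.sqrt_le_sqrt (kkt_test_norm α hα A T f w u)
  clear_value y₀
  clear_value Sx
  have hVy_le : kktVnorm α A T y₀ ≤ Real.sqrt 3 * kktVnorm α A T (f, u, w) := by
    rwa [Real.sqrt_mul (by norm_num) Sx, ← hVx_def] at hVy3
  have hy₀ : y₀ ≠ 0 := by
    intro h
    rw [h] at hlow
    simp only [kktForm, Prod.fst_zero, Prod.snd_zero, inner_zero_right,
      inner_zero_left, map_zero, mul_zero, add_zero, zero_add] at hlow
    nlinarith
  have hVy_pos : 0 < kktVnorm α A T y₀ := by
    rcases (kktVnorm_nonneg α A T y₀).lt_or_eq with h | h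
    · exact h
    · exfalso
      have hb := kkt_bound α hα A T (f, u, w) y₀
      rw [← h, mul_zero, mul_zero] at hb
      nlinarith
  -- value of the quotient at the test function
  have hQ : 1/7 ≤ kktForm α A T (f, u, w) y₀ /
      (kktVnorm α A T (f, u, w) * kktVnorm α A T y₀) := by
    rw [le_div_iff₀ (by positivity)]
    have p1 : kktVnorm α A T (f, u, w) * kktVnorm α A T y₀
        ≤ kktVnorm α A T (f, u, w) * (Real.sqrt 3 * kktVnorm α A T (f, u, w)) :=
      mul_le_mul_of_nonneg_left hVy_le hVx_pos.le
    have h3 : Real.sqrt 3 ≤ 7/4 := by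
      nlinarith [Real.sq_sqrt (by norm_num : (0:ℝ) ≤ 3), Real.sqrt_nonneg 3]
    nlinarith [mul_le_mul_of_nonneg_right h3
      (by positivity : (0:ℝ) ≤ kktVnorm α A T (f, u, w) ^ 2)]
  -- the supremum
  have hne : Nonempty {y : W × U × W // y ≠ 0} := ⟨⟨(f, u, w), hx⟩⟩
  have hbdd : ∀ y : {y : W × U × W // y ≠ 0},
      kktForm α A T (f, u, w) (y : W × U × W) /
        (kktVnorm α A T (f, u, w) * kktVnorm α A T (y : W × U × W)) ≤ 6 := by
    intro y
    have h0 : 0 ≤ kktVnorm α A T (f, u, w) * kktVnorm α A T (y : W × U × W) :=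
      mul_nonneg (kktVnorm_nonneg _ _ _ _) (kktVnorm_nonneg _ _ _ _)
    rcases h0.lt_or_eq with h | h
    · rw [div_le_iff₀ h]
      have := kkt_bound α hα A T (f, u, w) (y : W × U × W)
      linarith
    · rw [← h, div_zero]
      norm_num
  have hBdd : BddAbove (Set.range fun y : {y : W × U × W // y ≠ 0} =>
      kktForm α A T (f, u, w) (y : W × U × W) /
        (kktVnorm α A T (f, u, w) * kktVnorm α A T (y : W × U × W))) := by
    refine ⟨6, ?_⟩
    rintro _ ⟨y, rfl⟩
    exact hbdd y
  constructor
  · refine le_trans hQ ?_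
    exact le_ciSup hBdd ⟨y₀, hy₀⟩
  · exact ciSup_le hbdd

end
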